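/- For positive integers K, N let d_N^K denote the supremum over all real α of min_{K ≤ k ≤ K+N−1} ‖F_k α‖. For every fixed integer N ≥ 6, the limit as K → ∞ of d_N^K exists and equals 1/5. -/

import Mathlib

/-- Distance from a real number to the nearest integer. -/
noncomputable def distNearestInt (x : ℝ) : ℝ := |x - round x|

open Real

lemma distNearestInt_le (x : ℝ) (m : ℤ) : distNearestInt x ≤ |x - m| := by
  unfold distNearestInt
  rcases eq_or_ne m (round x) with h | h
  · rw [h]
  · have h1 : |x - round x| ≤ 1 / 2 := abs_sub_round x
    have h2 : (1 : ℝ) ≤ |(m : ℝ) - round x| := by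
      have : (1 : ℤ) ≤ |m - round x| := Int.one_le_abs (sub_ne_zero.mpr h)
      exact_mod_cast this
    have h3 : |(m : ℝ) - round x| ≤ |(m:ℝ) - x| + |x - round x| := abs_sub_le _ _ _
    have h4 : |(m:ℝ) - x| = |x - m| := abs_sub_comm _ _
    linarith

lemma core_pos (a b : ℝ) (ha2 : |a| ≤ 1/2) (hb2 : |b| ≤ 1/2) (hapos : 1/5 < a)
    (h1 : ∀ m : ℤ, 1/5 < |b - m|) (h2 : ∀ m : ℤ, 1/5 < |a + b - m|)
    (h3 : ∀ m : ℤ, 1/5 < |a + 2*b - m|) (h4 : ∀ m : ℤ, 1/5 < |2*a + 3*b - m|)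
    (h5 : ∀ m : ℤ, 1/5 < |3*a + 5*b - m|) : False := by
  rw [abs_le] at ha2 hb2
  have hb0 := h1 0
  norm_num at hb0
  rcases lt_abs.mp hb0 with hb | hb
  · -- b > 1/5
    have e2 := h2 1
    push_cast at e2
    have hab : a + b < 4/5 := by
      rcases lt_abs.mp e2 with h | h <;> linarith
    have e3 := h3 1
    push_cast at e3
    rcases lt_abs.mp e3 with h3a | h3b
    · -- a + 2b > 6/5
      have e4 := h4 2
      push_cast at e4
      have h45 : 2*a + 3*b < 9/5 := by
        rcases lt_abs.mp e4 with h | h <;> linarith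
      have e5 := h5 3
      push_cast at e5
      rcases lt_abs.mp e5 with h | h <;> linarith
    · -- a + 2b < 4/5
      have e4 := h4 1
      push_cast at e4
      have h46 : 6/5 < 2*a + 3*b := by
        rcases lt_abs.mp e4 with h | h <;> linarith
      have e5 := h5 2
      push_cast at e5
      rcases lt_abs.mp e5 with h | h <;> linarith
  · -- b < -1/5
    have e2 := h2 0
    push_cast at e2
    rcases lt_abs.mp e2 with hA | hB
    · -- a + b > 1/5
      have e3 := h3 0
      push_cast at e3
      have h3n : a + 2*b < -(1/5) := by
        rcases lt_abs.mp e3 with h | h <;> linarith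
      have e4 := h4 0
      push_cast at e4
      rcases lt_abs.mp e4 with h | h <;> linarith
    · -- a + b < -1/5
      have e4 := h4 (-1)
      push_cast at e4
      rcases lt_abs.mp e4 with h | h <;> linarith

lemma core (a b : ℝ) (ha2 : |a| ≤ 1/2) (hb2 : |b| ≤ 1/2)
    (h0 : ∀ m : ℤ, 1/5 < |a - m|) (h1 : ∀ m : ℤ, 1/5 < |b - m|)
    (h2 : ∀ m : ℤ, 1/5 < |a + b - m|) (h3 : ∀ m : ℤ, 1/5 < |a + 2*b - m|)
    (h4 : ∀ m : ℤ, 1/5 < |2*a + 3*b - m|) (h5 : ∀ m : ℤ, 1/5 < |3*a + 5*b - m|) :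
    False := by
  have ha0 := h0 0
  norm_num at ha0
  rcases lt_abs.mp ha0 with ha | ha
  · exact core_pos a b ha2 hb2 ha h1 h2 h3 h4 h5
  · refine core_pos (-a) (-b) (by rwa [abs_neg]) (by rwa [abs_neg]) (by linarith)
      (fun m => ?_) (fun m => ?_) (fun m => ?_) (fun m => ?_) (fun m => ?_)
    · rw [show (-b) - (m:ℝ) = -(b - ((-m : ℤ) : ℝ)) by push_cast; ring, abs_neg]
      exact h1 (-m)
    · rw [show (-a) + (-b) - (m:ℝ) = -(a + b - ((-m : ℤ) : ℝ)) by push_cast; ring, abs_neg]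
      exact h2 (-m)
    · rw [show (-a) + 2*(-b) - (m:ℝ) = -(a + 2*b - ((-m : ℤ) : ℝ)) by push_cast; ring, abs_neg]
      exact h3 (-m)
    · rw [show 2*(-a) + 3*(-b) - (m:ℝ) = -(2*a + 3*b - ((-m : ℤ) : ℝ)) by push_cast; ring,
        abs_neg]
      exact h4 (-m)
    · rw [show 3*(-a) + 5*(-b) - (m:ℝ) = -(3*a + 5*b - ((-m : ℤ) : ℝ)) by push_cast; ring,
        abs_neg]
      exact h5 (-m)

lemma upper_bound (K N : ℕ) (hN : 6 ≤ N) (α : ℝ)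
    (H : (Finset.Icc K (K + N - 1)).Nonempty) :
    (Finset.Icc K (K + N - 1)).inf' H (fun k => distNearestInt ((Nat.fib k : ℝ) * α))
      ≤ 1/5 := by
  by_contra hcon
  push_neg at hcon
  have hk : ∀ j, j ≤ 5 → 1/5 < distNearestInt ((Nat.fib (K + j) : ℝ) * α) := by
    intro j hj
    refine lt_of_lt_of_le hcon (Finset.inf'_le _ ?_)
    simp only [Finset.mem_Icc]
    omega
  set A : ℤ := round ((Nat.fib K : ℝ) * α) with hA
  set B : ℤ := round ((Nat.fib (K+1) : ℝ) * α) with hB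
  set a : ℝ := (Nat.fib K : ℝ) * α - A with ha
  set b : ℝ := (Nat.fib (K+1) : ℝ) * α - B with hb
  have f2 : (Nat.fib (K+2) : ℝ) = (Nat.fib K : ℝ) + Nat.fib (K+1) := by
    rw [Nat.fib_add_two]; push_cast; ring
  have f3 : (Nat.fib (K+3) : ℝ) = (Nat.fib K : ℝ) + 2 * Nat.fib (K+1) := by
    rw [show K+3 = (K+1)+2 by ring, Nat.fib_add_two]; push_cast; rw [f2]; ring
  have f4 : (Nat.fib (K+4) : ℝ) = 2 * (Nat.fib K : ℝ) + 3 * Nat.fib (K+1) := by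
    rw [show K+4 = (K+2)+2 by ring, Nat.fib_add_two]; push_cast
    rw [show K+2+1 = K+3 by ring, f2, f3]; ring
  have f5 : (Nat.fib (K+5) : ℝ) = 3 * (Nat.fib K : ℝ) + 5 * Nat.fib (K+1) := by
    rw [show K+5 = (K+3)+2 by ring, Nat.fib_add_two]; push_cast
    rw [show K+3+1 = K+4 by ring, f3, f4]; ring
  refine core a b (abs_sub_round _) (abs_sub_round _) (fun m => ?_) (fun m => ?_)
    (fun m => ?_) (fun m => ?_) (fun m => ?_) (fun m => ?_)
  · have hle := distNearestInt_le ((Nat.fib (K+0) : ℝ) * α) (A + m)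
    have he : (Nat.fib (K+0) : ℝ) * α - ((A + m : ℤ) : ℝ) = a - m := by
      rw [ha]; push_cast; ring_nf
    rw [he] at hle
    exact lt_of_lt_of_le (hk 0 (by norm_num)) hle
  · have hle := distNearestInt_le ((Nat.fib (K+1) : ℝ) * α) (B + m)
    have he : (Nat.fib (K+1) : ℝ) * α - ((B + m : ℤ) : ℝ) = b - m := by
      rw [hb]; push_cast; ring_nf
    rw [he] at hle
    exact lt_of_lt_of_le (hk 1 (by norm_num)) hle
  · have hle := distNearestInt_le ((Nat.fib (K+2) : ℝ) * α) (A + B + m)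
    have he : (Nat.fib (K+2) : ℝ) * α - ((A + B + m : ℤ) : ℝ) = a + b - m := by
      rw [ha, hb, f2]; push_cast; ring_nf
    rw [he] at hle
    exact lt_of_lt_of_le (hk 2 (by norm_num)) hle
  · have hle := distNearestInt_le ((Nat.fib (K+3) : ℝ) * α) (A + 2*B + m)
    have he : (Nat.fib (K+3) : ℝ) * α - ((A + 2*B + m : ℤ) : ℝ) = a + 2*b - m := by
      rw [ha, hb, f3]; push_cast; ring_nf
    rw [he] at hle
    exact lt_of_lt_of_le (hk 3 (by norm_num)) hle
  · have hle := distNearestInt_le ((Nat.fib (K+4) : ℝ) * α) (2*A + 3*B + m)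
    have he : (Nat.fib (K+4) : ℝ) * α - ((2*A + 3*B + m : ℤ) : ℝ) = 2*a + 3*b - m := by
      rw [ha, hb, f4]; push_cast; ring_nf
    rw [he] at hle
    exact lt_of_lt_of_le (hk 4 (by norm_num)) hle
  · have hle := distNearestInt_le ((Nat.fib (K+5) : ℝ) * α) (3*A + 5*B + m)
    have he : (Nat.fib (K+5) : ℝ) * α - ((3*A + 5*B + m : ℤ) : ℝ) = 3*a + 5*b - m := by
      rw [ha, hb, f5]; push_cast; ring_nf
    rw [he] at hle
    exact lt_of_lt_of_le (hk 5 (by norm_num)) hle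

lemma nk_mod (k : ℕ) : (2 * Nat.fib k + Nat.fib (k+1)) % 5 ≠ 0 := by
  induction k using Nat.strong_induction_on with
  | _ k ih =>
    match k with
    | 0 => decide
    | 1 => decide
    | 2 => decide
    | 3 => decide
    | (m+4) =>
      have h := ih m (by omega)
      have e2 : Nat.fib (m+2) = Nat.fib m + Nat.fib (m+1) := Nat.fib_add_two
      have e3 : Nat.fib (m+3) = Nat.fib (m+1) + Nat.fib (m+2) := Nat.fib_add_two
      have e4 : Nat.fib (m+4) = Nat.fib (m+2) + Nat.fib (m+3) := Nat.fib_add_two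
      have e5 : Nat.fib (m+5) = Nat.fib (m+3) + Nat.fib (m+4) := Nat.fib_add_two
      show (2 * Nat.fib (m+4) + Nat.fib (m+5)) % 5 ≠ 0
      omega

lemma dist_aux (n : ℕ) (hn : n % 5 ≠ 0) (e : ℝ) :
    1/5 - |e| ≤ distNearestInt ((n : ℝ)/5 - e) := by
  unfold distNearestInt
  set m : ℤ := round ((n : ℝ)/5 - e) with hm
  have h1 : ((n : ℤ) - 5*m) ≠ 0 := by omega
  have h2 : (1 : ℝ) ≤ |((n : ℤ) - 5*m : ℤ)| := by exact_mod_cast Int.one_le_abs h1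
  push_cast at h2
  have h3 : |(n : ℝ)/5 - m| = |(n : ℝ) - 5*m| / 5 := by
    rw [show (n : ℝ)/5 - m = ((n : ℝ) - 5*m)/5 by ring, abs_div]
    norm_num
  have h4 : |(n : ℝ)/5 - m| ≤ |(n : ℝ)/5 - e - m| + |e| := by
    have := abs_sub_le ((n : ℝ)/5) ((n:ℝ)/5 - e) (m : ℝ)
    have he : |(n:ℝ)/5 - ((n:ℝ)/5 - e)| = |e| := by rw [show (n:ℝ)/5 - ((n:ℝ)/5 - e) = e by ring]
    rw [he] at this
    linarith [this, abs_nonneg ((n:ℝ)/5 - e - (m:ℝ))]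
  have h5 : (1:ℝ)/5 ≤ |(n:ℝ)/5 - m| := by rw [h3]; linarith
  linarith

open goldenRatio in
lemma lower_each (k : ℕ) :
    1/5 - |goldenConj|^k/5 ≤ distNearestInt ((Nat.fib k : ℝ) * ((2 + goldenRatio)/5)) := by
  have key : (Nat.fib k : ℝ) * ((2 + goldenRatio)/5)
      = ((2 * Nat.fib k + Nat.fib (k+1) : ℕ) : ℝ)/5 - goldenConj^k/5 := by
    have h := Real.fib_succ_sub_goldenRatio_mul_fib k
    push_cast
    linear_combination (-1/5 : ℝ) * h
  rw [key]
  have := dist_aux (2 * Nat.fib k + Nat.fib (k+1)) (nk_mod k) (goldenConj^k/5)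
  have habs : |goldenConj^k/5| = |goldenConj|^k/5 := by
    rw [abs_div, abs_pow]; norm_num
  rw [habs] at this
  exact this

theorem d_N_K_tendsto (N : ℕ) (hN : 6 ≤ N) :
    Filter.Tendsto
      (fun K : ℕ => sSup {y : ℝ | ∃ α : ℝ,
        y = (Finset.Icc K (K + N - 1)).inf' (Finset.nonempty_Icc.mpr (by omega))
              (fun k => distNearestInt ((Nat.fib k : ℝ) * α))})
      Filter.atTop (nhds (1 / 5)) := by
  have hψ0 : (0:ℝ) ≤ |goldenConj| := abs_nonneg _
  have hψ : |goldenConj| < 1 := by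
    have h1 : Real.sqrt 5 < 3 := by
      nlinarith [Real.sq_sqrt (by norm_num : (5:ℝ) ≥ 0), Real.sqrt_nonneg 5]
    have h2 : (1:ℝ) < Real.sqrt 5 := by
      nlinarith [Real.sq_sqrt (by norm_num : (5:ℝ) ≥ 0), Real.sqrt_nonneg 5]
    rw [abs_lt]
    constructor <;> simp only [goldenConj] <;> linarith
  have hle : ∀ K : ℕ, ∀ y ∈ {y : ℝ | ∃ α : ℝ,
      y = (Finset.Icc K (K + N - 1)).inf' (Finset.nonempty_Icc.mpr (by omega))
            (fun k => distNearestInt ((Nat.fib k : ℝ) * α))}, y ≤ 1/5 := by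
    rintro K y ⟨α, rfl⟩
    exact upper_bound K N hN α _
  have hmem : ∀ K : ℕ,
      ((Finset.Icc K (K + N - 1)).inf' (Finset.nonempty_Icc.mpr (by omega))
        (fun k => distNearestInt ((Nat.fib k : ℝ) * ((2 + goldenRatio)/5))))
      ∈ {y : ℝ | ∃ α : ℝ,
        y = (Finset.Icc K (K + N - 1)).inf' (Finset.nonempty_Icc.mpr (by omega))
              (fun k => distNearestInt ((Nat.fib k : ℝ) * α))} := by
    intro K
    exact ⟨(2 + goldenRatio)/5, rfl⟩
  have hlow : ∀ K : ℕ, 1/5 - |goldenConj|^K/5 ≤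
      sSup {y : ℝ | ∃ α : ℝ,
        y = (Finset.Icc K (K + N - 1)).inf' (Finset.nonempty_Icc.mpr (by omega))
              (fun k => distNearestInt ((Nat.fib k : ℝ) * α))} := by
    intro K
    have hbdd : BddAbove {y : ℝ | ∃ α : ℝ,
        y = (Finset.Icc K (K + N - 1)).inf' (Finset.nonempty_Icc.mpr (by omega))
              (fun k => distNearestInt ((Nat.fib k : ℝ) * α))} := ⟨1/5, hle K⟩
    refine le_trans ?_ (le_csSup hbdd (hmem K))
    refine Finset.le_inf' _ _ (fun k hk => ?_)
    have hKk : K ≤ k := (Finset.mem_Icc.mp hk).1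
    have hpow : |goldenConj|^k ≤ |goldenConj|^K :=
      pow_le_pow_of_le_one hψ0 hψ.le hKk
    have := lower_each k
    linarith
  have hhigh : ∀ K : ℕ, sSup {y : ℝ | ∃ α : ℝ,
      y = (Finset.Icc K (K + N - 1)).inf' (Finset.nonempty_Icc.mpr (by omega))
            (fun k => distNearestInt ((Nat.fib k : ℝ) * α))} ≤ 1/5 := by
    intro K
    exact csSup_le ⟨_, hmem K⟩ (hle K)
  have htend : Filter.Tendsto (fun K : ℕ => 1/5 - |goldenConj|^K/5) Filter.atTop
      (nhds (1/5)) := by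
    have h0 : Filter.Tendsto (fun K : ℕ => |goldenConj|^K) Filter.atTop (nhds 0) :=
      tendsto_pow_atTop_nhds_zero_of_lt_one hψ0 hψ
    have := Filter.Tendsto.sub (tendsto_const_nhds (x := (1:ℝ)/5)) (h0.div_const 5)
    simpa using this
  exact tendsto_of_tendsto_of_tendsto_of_le_of_le htend tendsto_const_nhds hlow hhigh
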